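/- The pairing between the polynomial algebra E_n = span of monomials e[-i_1]···e[-i_n] (degree n in the generators e[-i], i ≥ 0) and the space F_n of symmetric polynomials in n variables, defined by ⟨e(z_1)···e(z_n), f⟩ = f(z_1,...,z_n) where e(z) = Σ_{i≥0} e[-i] z^i, is a well-defined non-degenerate bilinear pairing. -/

import Mathlib

open MvPolynomial

namespace PairingAux

variable (n : ℕ)

noncomputable def mof (t : Fin n → ℕ) : ℕ →₀ ℕ := ∑ j : Fin n, Finsupp.single (t j) 1

variable {n}

lemma mof_apply (t : Fin n → ℕ) (i : ℕ) :
    mof n t i = Multiset.count i ((List.ofFn t : List ℕ) : Multiset ℕ) := by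
  classical
  rw [mof, Finsupp.finset_sum_apply, ← Fin.univ_val_map, Multiset.count_map]
  rw [show (Multiset.filter (fun a => i = t a) Finset.univ.val)
      = (Finset.univ.filter (fun a => i = t a)).val from rfl, ← Finset.card_def,
    Finset.card_filter]
  simp [Finsupp.single_apply, eq_comm]

lemma mof_comp (t : Fin n → ℕ) (σ : Equiv.Perm (Fin n)) : mof n (t ∘ σ) = mof n t :=
  Equiv.sum_comp σ (fun j => Finsupp.single (t j) 1)

lemma exists_comp_perm {t t' : Fin n → ℕ} (h : mof n t = mof n t') :
    ∃ σ : Equiv.Perm (Fin n), t' = t ∘ σ := by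
  have hperm : (List.ofFn t).Perm (List.ofFn t') := by
    rw [List.perm_iff_count]
    intro i
    have := DFunLike.congr_fun h i
    simpa [mof_apply] using this
  have h1 : List.ofFn (t ∘ Tuple.sort t) = List.ofFn (t' ∘ Tuple.sort t') :=
    List.Perm.eq_of_sortedLE
      ((Tuple.monotone_sort t).sortedLE_ofFn) ((Tuple.monotone_sort t').sortedLE_ofFn)
      (((Tuple.sort t).ofFn_comp_perm t).trans
        (hperm.trans ((Tuple.sort t').ofFn_comp_perm t').symm))
  have h2 : t ∘ Tuple.sort t = t' ∘ Tuple.sort t' := List.ofFn_injective h1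
  refine ⟨(Tuple.sort t').symm.trans (Tuple.sort t), funext fun j => ?_⟩
  have := congrFun h2 ((Tuple.sort t').symm j)
  simpa using this.symm

lemma equivFun_symm_eq_sum (t : Fin n → ℕ) :
    (Finsupp.equivFunOnFinite.symm t : Fin n →₀ ℕ) = ∑ j : Fin n, Finsupp.single j (t j) := by
  ext i
  simp [Finsupp.finset_sum_apply, Finsupp.single_apply]

open Classical in
noncomputable def dm (n : ℕ) (m : ℕ →₀ ℕ) : Fin n →₀ ℕ :=
  if h : ∃ t : Fin n → ℕ, mof n t = m then Finsupp.equivFunOnFinite.symm h.choose else 0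

lemma coeff_symm_invariant {f : MvPolynomial (Fin n) ℂ} (hf : f.IsSymmetric)
    (σ : Equiv.Perm (Fin n)) (t : Fin n → ℕ) :
    coeff (Finsupp.equivFunOnFinite.symm (t ∘ σ)) f
      = coeff (Finsupp.equivFunOnFinite.symm t) f := by
  have h := coeff_rename_mapDomain (σ : Fin n → Fin n) σ.injective f
    (Finsupp.equivFunOnFinite.symm (t ∘ σ))
  rw [hf σ] at h
  rw [← h]
  congr 1
  ext i
  rw [show ((σ : Fin n → Fin n)) = ((σ : Fin n ≃ Fin n) : Fin n → Fin n) from rfl,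
    Finsupp.mapDomain_equiv_apply]
  simp

lemma coeff_dm_mof (t : Fin n → ℕ) {f : MvPolynomial (Fin n) ℂ} (hf : f.IsSymmetric) :
    coeff (dm n (mof n t)) f = coeff (Finsupp.equivFunOnFinite.symm t) f := by
  have hex : ∃ t' : Fin n → ℕ, mof n t' = mof n t := ⟨t, rfl⟩
  rw [dm]
  rw [dif_pos hex]
  obtain ⟨σ, hσ⟩ := exists_comp_perm hex.choose_spec
  conv_rhs => rw [hσ]
  exact (coeff_symm_invariant hf σ _).symm

end PairingAux

open PairingAux

noncomputable def Bmap (n : ℕ) : MvPolynomial ℕ ℂ →ₗ[ℂ] (MvPolynomial (Fin n) ℂ →ₗ[ℂ] ℂ) :=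
  (MvPolynomial.basisMonomials ℕ ℂ).constr ℂ (fun m => MvPolynomial.lcoeff (R := ℂ) (dm n m))

lemma Bmap_monomial (n : ℕ) (m : ℕ →₀ ℕ) (f : MvPolynomial (Fin n) ℂ) :
    Bmap n (monomial m 1) f = coeff (dm n m) f := by
  have : ((MvPolynomial.basisMonomials ℕ ℂ) m) = monomial m 1 := by
    exact congrFun (MvPolynomial.coe_basisMonomials ℕ ℂ) m
  rw [← this, Bmap, Module.Basis.constr_basis]
  rfl

lemma Bmap_monomial_c (n : ℕ) (m : ℕ →₀ ℕ) (c : ℂ) (f : MvPolynomial (Fin n) ℂ) :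
    Bmap n (monomial m c) f = c * coeff (dm n m) f := by
  have : (monomial m c : MvPolynomial ℕ ℂ) = c • monomial m 1 := by
    rw [smul_monomial, smul_eq_mul, mul_one]
  rw [this, map_smul, LinearMap.smul_apply, smul_eq_mul, Bmap_monomial]

lemma Bmap_apply (n : ℕ) (P : MvPolynomial ℕ ℂ) (f : MvPolynomial (Fin n) ℂ) :
    Bmap n P f = ∑ m ∈ P.support, coeff m P * coeff (dm n m) f := by
  conv_lhs => rw [P.as_sum]
  rw [map_sum, LinearMap.sum_apply]
  exact Finset.sum_congr rfl fun m _ => Bmap_monomial_c n m _ f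

namespace PairingAux

lemma degree_mof (t : Fin n → ℕ) : (mof n t).degree = n := by
  rw [Finsupp.degree_eq_weight_one, mof, map_sum]
  have : ∀ j : Fin n, Finsupp.weight (fun _ => 1 : ℕ → ℕ) (Finsupp.single (t j) 1) = 1 := by
    intro j
    rw [Finsupp.weight_apply, Finsupp.sum_single_index] <;> simp
  simp [this]

lemma exists_mof_of_degree {m : ℕ →₀ ℕ} (h : m.degree = n) : ∃ t : Fin n → ℕ, mof n t = m := by
  classical
  set l := m.toMultiset.toList with hl
  have hlen : l.length = n := by
    rw [hl, Multiset.length_toList, Finsupp.card_toMultiset, ← h, Finsupp.degree]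
    rfl
  refine ⟨fun j => l.get (Fin.cast hlen.symm j), ?_⟩
  have hofn : List.ofFn (fun j : Fin n => l.get (Fin.cast hlen.symm j)) = l := by
    apply List.ext_getElem
    · simp [hlen]
    · intro i h1 h2
      simp
  ext i
  rw [mof_apply, hofn, hl]
  rw [Multiset.coe_toList, Finsupp.count_toMultiset]

lemma mapDomain_dm_eq {m m0 : ℕ →₀ ℕ} (hm : ∃ t : Fin n → ℕ, mof n t = m)
    (hm0 : ∃ t : Fin n → ℕ, mof n t = m0) (σ : Equiv.Perm (Fin n))
    (h : Finsupp.mapDomain σ (dm n m0) = dm n m) : m = m0 := by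
  have hU : ∀ {m' : ℕ →₀ ℕ} (hm' : ∃ t : Fin n → ℕ, mof n t = m'),
      mof n (Finsupp.equivFunOnFinite (dm n m')) = m' := by
    intro m' hm'
    rw [dm, dif_pos hm', Equiv.apply_symm_apply]
    exact hm'.choose_spec
  set u0 : Fin n → ℕ := Finsupp.equivFunOnFinite (dm n m0)
  set u : Fin n → ℕ := Finsupp.equivFunOnFinite (dm n m)
  have hfun : u = u0 ∘ σ.symm := by
    funext i
    have := DFunLike.congr_fun h i
    rw [show ((σ : Fin n → Fin n)) = ((σ : Fin n ≃ Fin n) : Fin n → Fin n) from rfl,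
      Finsupp.mapDomain_equiv_apply] at this
    exact this.symm
  calc m = mof n u := (hU hm).symm
    _ = mof n u0 := by rw [hfun]; exact mof_comp u0 σ.symm
    _ = m0 := hU hm0

end PairingAux

/-- There is a well-defined non-degenerate bilinear pairing between the
degree-`n` component `E_n` of the polynomial algebra `E = ℂ[e[0], e[-1], e[-2], …]`
(realized as `MvPolynomial ℕ ℂ`, with `e[-i] = X i`, `E_n` being the span of products of
`n` generators, i.e. the homogeneous polynomials of degree `n`) and the space
`F_n = ℂ[x_1,…,x_n]^{S_n}` of symmetric polynomials, determined by
`⟨e(z_1)⋯e(z_n), f⟩ = f(z_1,…,z_n)` where `e(z) = Σ_{i ≥ 0} e[-i] z^i`; that is,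
`⟨e[-i_1]⋯e[-i_n], f⟩` is the coefficient of `z_1^{i_1}⋯z_n^{i_n}` in `f`. -/
theorem pairing_exists_nondegenerate (n : ℕ) :
    ∃ B : MvPolynomial ℕ ℂ →ₗ[ℂ] (MvPolynomial (Fin n) ℂ →ₗ[ℂ] ℂ),
      (∀ (t : Fin n → ℕ) (f : MvPolynomial (Fin n) ℂ), f.IsSymmetric →
        B (∏ j : Fin n, X (t j)) f = coeff (∑ j : Fin n, Finsupp.single j (t j)) f) ∧
      (∀ P : MvPolynomial ℕ ℂ, P.IsHomogeneous n → P ≠ 0 →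
        ∃ f : MvPolynomial (Fin n) ℂ, f.IsSymmetric ∧ B P f ≠ 0) ∧
      (∀ f : MvPolynomial (Fin n) ℂ, f.IsSymmetric → f ≠ 0 →
        ∃ P : MvPolynomial ℕ ℂ, P.IsHomogeneous n ∧ B P f ≠ 0) := by
  classical
  refine ⟨Bmap n, ?_, ?_, ?_⟩
  · intro t f hf
    have hprod : (∏ j : Fin n, (X (t j) : MvPolynomial ℕ ℂ)) = monomial (mof n t) 1 := by
      rw [mof, monomial_sum_one]
      rfl
    rw [hprod, Bmap_monomial, coeff_dm_mof t hf, equivFun_symm_eq_sum]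
  · intro P hP hP0
    obtain ⟨m0, hm0⟩ := (support_nonempty).mpr hP0
    have hdeg : ∀ m ∈ P.support, ∃ t : Fin n → ℕ, mof n t = m := by
      intro m hm
      refine exists_mof_of_degree ?_
      rw [Finsupp.degree_eq_weight_one]
      exact hP (mem_support_iff.mp hm)
    set u : Fin n →₀ ℕ := dm n m0 with hu
    refine ⟨∑ σ : Equiv.Perm (Fin n), monomial (Finsupp.mapDomain σ u) 1, ?_, ?_⟩
    · intro τ
      rw [map_sum]
      refine Fintype.sum_equiv (Equiv.mulLeft τ) _ _ fun σ => ?_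
      rw [rename_monomial]
      congr 1
      rw [← Finsupp.mapDomain_comp]
      congr 1
    · have hcoeffs : ∀ m ∈ P.support,
          coeff (dm n m) (∑ σ : Equiv.Perm (Fin n), monomial (Finsupp.mapDomain σ u) 1)
            = ((Finset.univ.filter fun σ : Equiv.Perm (Fin n) =>
                Finsupp.mapDomain σ u = dm n m).card : ℂ) := by
        intro m hm
        rw [← Finset.sum_boole]
        rw [coeff_sum]
        exact Finset.sum_congr rfl fun σ _ => by rw [coeff_monomial]
      rw [Bmap_apply, Finset.sum_eq_single m0]
      · rw [hcoeffs m0 hm0]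
        refine mul_ne_zero (mem_support_iff.mp hm0) ?_
        rw [Nat.cast_ne_zero, ← Nat.pos_iff_ne_zero, Finset.card_pos]
        exact ⟨1, by simp [Finsupp.mapDomain_id, hu]⟩
      · intro m hm hne
        rw [hcoeffs m hm]
        convert mul_zero _
        rw [Nat.cast_eq_zero, Finset.card_eq_zero, Finset.filter_eq_empty_iff]
        intro σ _ hcontra
        exact hne (mapDomain_dm_eq (hdeg m hm) (hdeg m0 hm0) σ hcontra)
      · intro h
        exact absurd hm0 h
  · intro f hf hf0
    obtain ⟨u, hu⟩ := (support_nonempty).mpr hf0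
    refine ⟨monomial (mof n (u : Fin n → ℕ)) 1, isHomogeneous_monomial 1 (degree_mof _), ?_⟩
    rw [Bmap_monomial, coeff_dm_mof _ hf, Finsupp.equivFunOnFinite_symm_coe]
    exact mem_support_iff.mp hu
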